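/- The subgroup of BV̂ generated by the set {v_i : i ∈ ℕ} is isomorphic to Thompson's group F; more precisely, the homomorphism from F to BV̂ determined by sending the generator λ_i of F to v_i for each i ∈ ℕ is injective, so it gives an isomorphism of F onto the subgroup of BV̂ generated by {v_i : i ∈ ℕ}. -/

import Mathlib

namespace BrinStmt5

/-- Cantor space. -/
abbrev C := ℕ → Bool
/-- Strand space. -/
abbrev X := ℕ × C

def cons (b : Bool) (c : C) : C := fun k => match k with
  | 0 => b
  | k+1 => c k

def tl (c : C) : C := fun k => c (k+1)

@[simp] lemma cons_zero (b c) : cons b c 0 = b := rfl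
@[simp] lemma cons_succ (b c k) : cons b c (k+1) = c k := rfl
@[simp] lemma tl_cons (b c) : tl (cons b c) = c := rfl
@[simp] lemma tl_apply (c : C) (k) : tl c k = c (k+1) := rfl

lemma cons_tl (c : C) : cons (c 0) (tl c) = c := by
  funext k; cases k <;> rfl

lemma cons_tl' {c : C} {b : Bool} (h : c 0 = b) : cons b (tl c) = c := by
  subst h; exact cons_tl c

lemma cons_injective (b : Bool) : Function.Injective (cons b) := by
  intro x y h
  have : tl (cons b x) = tl (cons b y) := by rw [h]
  simpa using this

/-- the "merge strands i, i+1" permutation -/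
def lam (i : ℕ) : Equiv.Perm X where
  toFun p := if p.1 < i then p else if p.1 = i then (i, cons false p.2)
    else if p.1 = i+1 then (i, cons true p.2) else (p.1 - 1, p.2)
  invFun p := if p.1 < i then p else if p.1 = i then
      (if p.2 0 then (i+1, tl p.2) else (i, tl p.2)) else (p.1 + 1, p.2)
  left_inv := by
    rintro ⟨n, c⟩
    rcases lt_trichotomy n i with h | h | h
    · simp [h]
    · subst h; simp
    · rcases Nat.eq_or_lt_of_le h with h1 | h1
      · simp [← h1, Nat.lt_irrefl]
      · have h2 : ¬ (n < i) := by omega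
        have h3 : n ≠ i := by omega
        have h4 : n ≠ i + 1 := by omega
        simp only [h2, h3, h4, if_false, if_neg]
        have h5 : ¬ (n - 1 < i) := by omega
        have h6 : n - 1 ≠ i := by omega
        simp only [h5, h6, if_false, if_neg]
        have : n - 1 + 1 = n := by omega
        simp [this]
  right_inv := by
    rintro ⟨n, c⟩
    rcases lt_trichotomy n i with h | h | h
    · simp [h]
    · subst h
      by_cases hc : c 0
      · simp [hc, cons_tl' hc]
      · simp only [lt_irrefl, if_false, if_pos rfl, hc, if_neg, Bool.false_eq_true]
        have : cons false (tl c) = c := cons_tl' (by simpa using hc)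
        simp [this]
    · have h2 : ¬ (n < i) := by omega
      have h3 : n ≠ i := by omega
      simp only [h2, h3, if_false, if_neg]
      have h4 : ¬ (n + 1 < i) := by omega
      have h5 : n + 1 ≠ i := by omega
      by_cases h6 : n + 1 = i + 1
      · omega
      · simp [h4, h5, h6, h3]

/-- the "swap strands i, i+1" permutation -/
def sg (i : ℕ) : Equiv.Perm X := (Equiv.swap i (i+1)).prodCongr (Equiv.refl C)

lemma sg_inv (i : ℕ) : (sg i)⁻¹ = sg i := by
  have : (sg i) * (sg i) = 1 := by
    ext p
    · simp [sg, Equiv.prodCongr, Equiv.swap_apply_def]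
      rcases p with ⟨n, c⟩
      dsimp
      split_ifs <;> omega
    · rfl
  calc (sg i)⁻¹ = (sg i)⁻¹ * ((sg i) * (sg i)) := by rw [this]; group
    _ = sg i := by group



/-- restrict a permutation of `C` to the `0·C` half. -/
def halfPerm (e : Equiv.Perm C) : Equiv.Perm C where
  toFun z := if z 0 then z else cons false (e (tl z))
  invFun z := if z 0 then z else cons false (e.symm (tl z))
  left_inv := by
    intro z
    by_cases h : z 0
    · simp [h]
    · simp only [h, if_neg, Bool.false_eq_true, if_false, cons_zero, tl_cons,
        Equiv.symm_apply_apply]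
      exact cons_tl' (by simpa using h)
  right_inv := by
    intro z
    by_cases h : z 0
    · simp [h]
    · simp only [h, if_neg, Bool.false_eq_true, if_false, cons_zero, tl_cons,
        Equiv.apply_symm_apply]
      exact cons_tl' (by simpa using h)

/-- the base Thompson generator on Cantor space:
`1w ↦ 11w`, `00w ↦ 0w`, `01w ↦ 10w`. -/
def y0 : Equiv.Perm C where
  toFun z := if z 0 then cons true z
    else if z 1 then cons true (cons false (tl (tl z))) else tl z
  invFun z := if z 0 then (if z 1 then tl z else cons false (cons true (tl (tl z))))
    else cons false z
  left_inv := by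
    intro z
    dsimp only
    by_cases h0 : z 0
    · simp [h0]
    · by_cases h1 : z 1
      · have e0 : (if z 0 = true then cons true z
            else if z 1 = true then cons true (cons false (tl (tl z))) else tl z)
            = cons true (cons false (tl (tl z))) := by simp [h0, h1]
        rw [e0]
        have u0 : (cons true (cons false (tl (tl z)))) 0 = true := rfl
        have u1 : (cons true (cons false (tl (tl z)))) 1 = false := rfl
        simp only [u0, u1, if_true, Bool.false_eq_true, if_false, tl_cons]
        funext k
        match k with
        | 0 => simpa using h0
        | 1 => simpa using h1
        | (k+2) => rfl
      · have e0 : (if z 0 = true then cons true z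
            else if z 1 = true then cons true (cons false (tl (tl z))) else tl z)
            = tl z := by simp [h0, h1]
        rw [e0]
        have u0 : (tl z) 0 = false := by simpa using h1
        simp only [u0, Bool.false_eq_true, if_false]
        funext k
        match k with
        | 0 => simpa using h0
        | (k+1) => rfl
  right_inv := by
    intro z
    dsimp only
    by_cases h0 : z 0
    · by_cases h1 : z 1
      · have e0 : (if z 0 = true then if z 1 = true then tl z
            else cons false (cons true (tl (tl z))) else cons false z) = tl z := by
          simp [h0, h1]
        rw [e0]
        have u0 : (tl z) 0 = true := by simpa using h1
        simp only [u0, if_true]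
        exact cons_tl' h0
      · have e0 : (if z 0 = true then if z 1 = true then tl z
            else cons false (cons true (tl (tl z))) else cons false z)
            = cons false (cons true (tl (tl z))) := by simp [h0, h1]
        rw [e0]
        have u0 : (cons false (cons true (tl (tl z)))) 0 = false := rfl
        have u1 : (cons false (cons true (tl (tl z)))) 1 = true := rfl
        simp only [u0, u1, Bool.false_eq_true, if_false, if_true, tl_cons]
        funext k
        match k with
        | 0 => simpa using h0
        | 1 => simpa using h1
        | (k+2) => rfl
    · have e0 : (if z 0 = true then if z 1 = true then tl z
          else cons false (cons true (tl (tl z))) else cons false z) = cons false z := by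
        simp [h0]
      rw [e0]
      have u0 : (cons false z) 0 = false := rfl
      have u1 : (cons false z) 1 = false := by simpa using h0
      simp only [u0, u1, Bool.false_eq_true, if_false]
      funext k
      match k with
      | 0 => simpa using h0
      | (k+1) => rfl

/-- The Thompson generators `Y n` on Cantor space. -/
def Y : ℕ → Equiv.Perm C
  | 0 => y0
  | n+1 => halfPerm (Y n)

/-- Extend a permutation of `C` to `X`, acting on strand `0`. -/
def strand0 (e : Equiv.Perm C) : Equiv.Perm X where
  toFun p := if p.1 = 0 then (0, e p.2) else p
  invFun p := if p.1 = 0 then (0, e.symm p.2) else p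
  left_inv := by rintro ⟨n, c⟩; cases n <;> simp
  right_inv := by rintro ⟨n, c⟩; cases n <;> simp

lemma strand0_mul (e f : Equiv.Perm C) :
    strand0 (e * f) = strand0 e * strand0 f := by
  ext ⟨n, c⟩
  · cases n <;> simp [strand0]
  · cases n <;> simp [strand0]

/-- images of the `v_n` in `Perm X`. -/
def XP (n : ℕ) : Equiv.Perm X := strand0 (Y n)


@[simp] lemma lam_apply (i n : ℕ) (c : C) :
    lam i (n, c) = if n < i then (n, c) else if n = i then (i, cons false c)
      else if n = i+1 then (i, cons true c) else (n-1, c) := rfl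

@[simp] lemma sg_apply (i n : ℕ) (c : C) :
    sg i (n, c) = (if n = i then i+1 else if n = i+1 then i else n, c) := by
  simp [sg, Equiv.swap_apply_def]

section rels
variable {m n q i : ℕ} {c : C}

lemma lam_lt (i n : ℕ) (c : C) (h : n < i) : lam i (n,c) = (n,c) := by
  simp only [lam_apply]; split_ifs <;> first | rfl | (exfalso; omega)
lemma lam_self (i : ℕ) (c : C) : lam i (i,c) = (i, cons false c) := by
  simp only [lam_apply]; split_ifs <;> first | rfl | (exfalso; omega)
lemma lam_succ (i : ℕ) (c : C) : lam i (i+1,c) = (i, cons true c) := by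
  simp only [lam_apply]; split_ifs <;> first | rfl | (exfalso; omega)
lemma lam_gt (i n : ℕ) (c : C) (h : i+1 < n) : lam i (n,c) = (n-1,c) := by
  simp only [lam_apply]; split_ifs <;> first | rfl | (exfalso; omega)
lemma sg_self (i : ℕ) (c : C) : sg i (i,c) = (i+1,c) := by
  simp only [sg_apply]; split_ifs <;> first | rfl | (exfalso; omega)
lemma sg_succ (i : ℕ) (c : C) : sg i (i+1,c) = (i,c) := by
  simp only [sg_apply]; split_ifs <;> first | rfl | (exfalso; omega)
lemma sg_other (i n : ℕ) (c : C) (h1 : n ≠ i) (h2 : n ≠ i+1) : sg i (n,c) = (n,c) := by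
  simp only [sg_apply]; split_ifs <;> first | rfl | (exfalso; omega)

lemma relR1 (h : m < q) : lam q * lam m = lam m * lam (q+1) := by
  apply Equiv.ext; rintro ⟨n, c⟩
  simp only [Equiv.Perm.mul_apply]
  rcases show n < m ∨ n = m ∨ n = m+1 ∨ (m+1 < n ∧ n ≤ q) ∨ n = q+1 ∨ n = q+2
      ∨ q+2 < n by omega with h1|h1|h1|h1|h1|h1|h1
  · rw [lam_lt m n c h1, lam_lt q n c (by omega), lam_lt (q+1) n c (by omega),
      lam_lt m n c h1]
  · subst h1
    rw [lam_self n c, lam_lt q n (cons false c) (by omega), lam_lt (q+1) n c (by omega),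
      lam_self n c]
  · subst h1
    rw [lam_succ m c, lam_lt q m (cons true c) (by omega), lam_lt (q+1) (m+1) c (by omega),
      lam_succ m c]
  · obtain ⟨h1, h2⟩ := h1
    rw [lam_gt m n c h1, lam_lt q (n-1) c (by omega), lam_lt (q+1) n c (by omega),
      lam_gt m n c h1]
  · subst h1
    rw [lam_gt m (q+1) c (by omega), show q+1-1 = q from rfl, lam_self q c,
      lam_self (q+1) c, lam_gt m (q+1) (cons false c) (by omega)]
    rfl
  · subst h1
    rw [show q+2 = q+1+1 from rfl, lam_gt m (q+1+1) c (by omega),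
      show q+1+1-1 = q+1 from rfl, lam_succ q c, lam_succ (q+1) c,
      lam_gt m (q+1) (cons true c) (by omega)]
    rfl
  · rw [lam_gt m n c (by omega), lam_gt q (n-1) c (by omega), lam_gt (q+1) n c (by omega),
      lam_gt m (n-1) c (by omega)]

lemma sg_mul_sg (i j : ℕ) :
    sg i * sg j = (Equiv.swap i (i+1) * Equiv.swap j (j+1)).prodCongr (Equiv.refl C) := by
  apply Equiv.ext; rintro ⟨n, c⟩; rfl

lemma swap_eq_of (f g : Equiv.Perm ℕ) (h : f = g) :
    f.prodCongr (Equiv.refl C) = g.prodCongr (Equiv.refl C) := by rw [h]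

lemma sg_mul_sg_mul_sg (i j k : ℕ) :
    sg i * sg j * sg k = (Equiv.swap i (i+1) * Equiv.swap j (j+1)
      * Equiv.swap k (k+1)).prodCongr (Equiv.refl C) := by
  apply Equiv.ext; rintro ⟨n, c⟩; rfl

lemma relR2 (h : m + 2 ≤ n ∨ n + 2 ≤ m) : sg m * sg n = sg n * sg m := by
  rw [sg_mul_sg, sg_mul_sg]
  apply swap_eq_of
  apply Equiv.ext; intro k
  simp only [Equiv.Perm.mul_apply, Equiv.swap_apply_def]
  split_ifs <;> omega

lemma relR3 : sg m * sg (m+1) * sg m = sg (m+1) * sg m * sg (m+1) := by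
  rw [sg_mul_sg_mul_sg, sg_mul_sg_mul_sg]
  apply swap_eq_of
  apply Equiv.ext; intro k
  simp only [Equiv.Perm.mul_apply]
  rcases show k = m ∨ k = m+1 ∨ k = m+1+1 ∨ (k ≠ m ∧ k ≠ m+1 ∧ k ≠ m+1+1)
      by omega with h1|h1|h1|h1
  · subst h1
    rw [Equiv.swap_apply_left k (k+1),
      Equiv.swap_apply_of_ne_of_ne (show k ≠ k+1 by omega) (show k ≠ k+1+1 by omega),
      Equiv.swap_apply_left (k+1) (k+1+1), Equiv.swap_apply_left k (k+1),
      Equiv.swap_apply_of_ne_of_ne (show k+1+1 ≠ k by omega) (show k+1+1 ≠ k+1 by omega),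
      Equiv.swap_apply_left (k+1) (k+1+1)]
  · subst h1
    rw [Equiv.swap_apply_right m (m+1),
      Equiv.swap_apply_left (m+1) (m+1+1),
      Equiv.swap_apply_of_ne_of_ne (show m ≠ m+1 by omega) (show m ≠ m+1+1 by omega),
      Equiv.swap_apply_left m (m+1),
      Equiv.swap_apply_of_ne_of_ne (show m+1+1 ≠ m by omega) (show m+1+1 ≠ m+1 by omega),
      Equiv.swap_apply_right (m+1) (m+1+1)]
  · subst h1
    rw [Equiv.swap_apply_of_ne_of_ne (show m+1+1 ≠ m by omega) (show m+1+1 ≠ m+1 by omega),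
      Equiv.swap_apply_right (m+1) (m+1+1), Equiv.swap_apply_right m (m+1),
      Equiv.swap_apply_of_ne_of_ne (show m ≠ m+1 by omega) (show m ≠ m+1+1 by omega)]
  · obtain ⟨h1, h2, h3⟩ := h1
    rw [Equiv.swap_apply_of_ne_of_ne h1 h2,
      Equiv.swap_apply_of_ne_of_ne h2 h3,
      Equiv.swap_apply_of_ne_of_ne h1 h2,
      Equiv.swap_apply_of_ne_of_ne h2 h3]

lemma relR4 (h : m < q) : sg q * lam m = lam m * sg (q+1) := by
  apply Equiv.ext; rintro ⟨n, c⟩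
  simp only [Equiv.Perm.mul_apply]
  rcases show n < m ∨ n = m ∨ n = m+1 ∨ (m+1 < n ∧ n ≠ q+1 ∧ n ≠ q+2) ∨ n = q+1 ∨ n = q+2
      by omega with h1|h1|h1|h1|h1|h1
  · rw [lam_lt m n c h1, sg_other q n c (by omega) (by omega),
      sg_other (q+1) n c (by omega) (by omega), lam_lt m n c h1]
  · subst h1
    rw [lam_self n c, sg_other q n (cons false c) (by omega) (by omega),
      sg_other (q+1) n c (by omega) (by omega), lam_self n c]
  · subst h1
    rw [lam_succ m c, sg_other q m (cons true c) (by omega) (by omega),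
      sg_other (q+1) (m+1) c (by omega) (by omega), lam_succ m c]
  · obtain ⟨h1, h2, h3⟩ := h1
    rw [lam_gt m n c h1, sg_other q (n-1) c (by omega) (by omega),
      sg_other (q+1) n c (by omega) (by omega), lam_gt m n c h1]
  · subst h1
    rw [lam_gt m (q+1) c (by omega), show q+1-1 = q from rfl, sg_self q c, sg_self (q+1) c,
      show q+1+1 = q+2 from rfl, lam_gt m (q+2) c (by omega)]
    rfl
  · subst h1
    rw [show q+2 = q+1+1 from rfl, lam_gt m (q+1+1) c (by omega),
      show q+1+1-1 = q+1 from rfl, sg_succ q c, sg_succ (q+1) c,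
      lam_gt m (q+1) c (by omega)]
    rfl

lemma relR5 : sg m * lam m = lam (m+1) * sg m * sg (m+1) := by
  apply Equiv.ext; rintro ⟨n, c⟩
  simp only [Equiv.Perm.mul_apply]
  rcases show n < m ∨ n = m ∨ n = m+1 ∨ n = m+2 ∨ m+2 < n by omega with h1|h1|h1|h1|h1
  · rw [lam_lt m n c h1, sg_other m n c (by omega) (by omega),
      sg_other (m+1) n c (by omega) (by omega), sg_other m n c (by omega) (by omega),
      lam_lt (m+1) n c (by omega)]
  · subst h1
    rw [lam_self n c, sg_self n (cons false c), sg_other (n+1) n c (by omega) (by omega),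
      sg_self n c, lam_self (n+1) c]
  · subst h1
    rw [lam_succ m c, sg_self m (cons true c), sg_self (m+1) c,
      sg_other m (m+1+1) c (by omega) (by omega), lam_succ (m+1) c]
  · subst h1
    rw [show m+2 = m+1+1 from rfl, lam_gt m (m+1+1) c (by omega),
      show m+1+1-1 = m+1 from rfl, sg_succ m c, sg_succ (m+1) c, sg_succ m c,
      lam_lt (m+1) m c (by omega)]
  · rw [lam_gt m n c (by omega), sg_other m (n-1) c (by omega) (by omega),
      sg_other (m+1) n c (by omega) (by omega), sg_other m n c (by omega) (by omega),
      lam_gt (m+1) n c (by omega)]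

lemma relR6 : sg m * lam (m+1) = lam m * sg (m+1) * sg m := by
  apply Equiv.ext; rintro ⟨n, c⟩
  simp only [Equiv.Perm.mul_apply]
  rcases show n < m ∨ n = m ∨ n = m+1 ∨ n = m+2 ∨ m+2 < n by omega with h1|h1|h1|h1|h1
  · rw [lam_lt (m+1) n c (by omega), sg_other m n c (by omega) (by omega),
      sg_other (m+1) n c (by omega) (by omega), lam_lt m n c h1]
  · subst h1
    rw [lam_lt (n+1) n c (by omega), sg_self n c, sg_self (n+1) c,
      lam_gt n (n+1+1) c (by omega)]
    rfl
  · subst h1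
    rw [lam_self (m+1) c, sg_succ m (cons false c), sg_succ m c,
      sg_other (m+1) m c (by omega) (by omega), lam_self m c]
  · subst h1
    rw [show m+2 = m+1+1 from rfl, lam_succ (m+1) c, sg_succ m (cons true c),
      sg_other m (m+1+1) c (by omega) (by omega), sg_succ (m+1) c, lam_succ m c]
  · rw [lam_gt (m+1) n c (by omega), sg_other m (n-1) c (by omega) (by omega),
      sg_other m n c (by omega) (by omega), sg_other (m+1) n c (by omega) (by omega),
      lam_gt m n c (by omega)]

lemma relR7 (h : q + 1 < m) : sg q * lam m = lam m * sg q := by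
  apply Equiv.ext; rintro ⟨n, c⟩
  simp only [Equiv.Perm.mul_apply]
  rcases show n = q ∨ n = q+1 ∨ (n < m ∧ n ≠ q ∧ n ≠ q+1) ∨ n = m ∨ n = m+1 ∨ m+1 < n
      by omega with h1|h1|h1|h1|h1|h1
  · subst h1
    rw [lam_lt m n c (by omega), sg_self n c, lam_lt m (n+1) c (by omega)]
  · subst h1
    rw [lam_lt m (q+1) c (by omega), sg_succ q c, lam_lt m q c (by omega)]
  · obtain ⟨h1, h2, h3⟩ := h1
    rw [lam_lt m n c h1, sg_other q n c h2 h3, lam_lt m n c h1]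
  · subst h1
    rw [lam_self n c, sg_other q n (cons false c) (by omega) (by omega),
      sg_other q n c (by omega) (by omega), lam_self n c]
  · subst h1
    rw [lam_succ m c, sg_other q m (cons true c) (by omega) (by omega),
      sg_other q (m+1) c (by omega) (by omega), lam_succ m c]
  · rw [lam_gt m n c h1, sg_other q (n-1) c (by omega) (by omega),
      sg_other q n c (by omega) (by omega), lam_gt m n c h1]

end rels



/-! ### Statement definitions -/

def lamF (i : ℕ) : FreeGroup (ℕ ⊕ ℕ) := FreeGroup.of (Sum.inl i)
def sigF (i : ℕ) : FreeGroup (ℕ ⊕ ℕ) := FreeGroup.of (Sum.inr i)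

/-- The relators of the infinite presentation of the group `BV̂`. -/
def bvhatRels : Set (FreeGroup (ℕ ⊕ ℕ)) :=
  { r | (∃ m q : ℕ, m < q ∧ r = lamF q * lamF m * (lamF m * lamF (q+1))⁻¹) ∨
        (∃ m n : ℕ, (m + 2 ≤ n ∨ n + 2 ≤ m) ∧
            r = sigF m * sigF n * (sigF n * sigF m)⁻¹) ∨
        (∃ m : ℕ, r = sigF m * sigF (m+1) * sigF m *
            (sigF (m+1) * sigF m * sigF (m+1))⁻¹) ∨
        (∃ (m q : ℕ) (e : ℤ), (e = 1 ∨ e = -1) ∧ m < q ∧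
            r = (sigF q) ^ e * lamF m * (lamF m * (sigF (q+1)) ^ e)⁻¹) ∨
        (∃ (m : ℕ) (e : ℤ), (e = 1 ∨ e = -1) ∧
            r = (sigF m) ^ e * lamF m *
              (lamF (m+1) * (sigF m) ^ e * (sigF (m+1)) ^ e)⁻¹) ∨
        (∃ (m : ℕ) (e : ℤ), (e = 1 ∨ e = -1) ∧
            r = (sigF m) ^ e * lamF (m+1) *
              (lamF m * (sigF (m+1)) ^ e * (sigF m) ^ e)⁻¹) ∨
        (∃ (m q : ℕ) (e : ℤ), (e = 1 ∨ e = -1) ∧ q + 1 < m ∧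
            r = (sigF q) ^ e * lamF m * (lamF m * (sigF q) ^ e)⁻¹) }

/-- The group `BV̂`, given by its infinite presentation. -/
abbrev BVhat := PresentedGroup bvhatRels

/-- The generator `λ_i` of `BV̂`. -/
def lamB (i : ℕ) : BVhat := PresentedGroup.of (Sum.inl i)
/-- The generator `σ_i` of `BV̂`. -/
def sigB (i : ℕ) : BVhat := PresentedGroup.of (Sum.inr i)

/-- The element `v_n = λ_0^{n+1} λ_1 λ_0^{-n-2}` of `BV̂`. -/
def vB (n : ℕ) : BVhat := lamB 0 ^ (n+1) * lamB 1 * lamB 0 ^ (-((n : ℤ) + 2))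
/-- The element `π_n = λ_0^{n+2} σ_1 λ_0^{-n-2}` of `BV̂`. -/
def piB (n : ℕ) : BVhat := lamB 0 ^ (n+2) * sigB 1 * lamB 0 ^ (-((n : ℤ) + 2))
/-- The element `π̄_n = λ_0^{n+1} σ_0 λ_0^{-n-1}` of `BV̂`. -/
def opiB (n : ℕ) : BVhat := lamB 0 ^ (n+1) * sigB 0 * lamB 0 ^ (-((n : ℤ) + 1))

/-- The relators of the infinite presentation of Thompson's group `F`:
`λ_q λ_m = λ_m λ_{q+1}` for `m < q`. -/
def fRels : Set (FreeGroup ℕ) :=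
  { r | ∃ m q : ℕ, m < q ∧
      r = FreeGroup.of q * FreeGroup.of m * (FreeGroup.of m * FreeGroup.of (q+1))⁻¹ }

/-- Thompson's group `F`, given by its infinite presentation. -/
abbrev FGrp := PresentedGroup fRels


/-! ### The homomorphism `ψ : BVhat →* Perm X` -/

def gensMap : ℕ ⊕ ℕ → Equiv.Perm X := Sum.elim lam sg

lemma sg_zpow (i : ℕ) {e : ℤ} (he : e = 1 ∨ e = -1) : sg i ^ e = sg i := by
  rcases he with rfl | rfl
  · exact zpow_one _
  · rw [zpow_neg, zpow_one, sg_inv]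

lemma bv_rels_hold : ∀ r ∈ bvhatRels, FreeGroup.lift gensMap r = 1 := by
  intro r hr
  rcases hr with ⟨m,q,hmq,rfl⟩ | ⟨m,n,hc,rfl⟩ | ⟨m,rfl⟩ | ⟨m,q,e,he,hmq,rfl⟩ |
    ⟨m,e,he,rfl⟩ | ⟨m,e,he,rfl⟩ | ⟨m,q,e,he,hmq,rfl⟩ <;>
    simp only [map_mul, map_inv, map_zpow, lamF, sigF, FreeGroup.lift_apply_of, gensMap,
      Sum.elim_inl, Sum.elim_inr, mul_inv_eq_one]
  · exact relR1 hmq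
  · exact relR2 hc
  · exact relR3
  · rw [sg_zpow q he, sg_zpow (q+1) he]; exact relR4 hmq
  · rw [sg_zpow m he, sg_zpow (m+1) he]; exact relR5
  · rw [sg_zpow m he, sg_zpow (m+1) he]; exact relR6
  · rw [sg_zpow q he]; exact relR7 hmq

def psi : BVhat →* Equiv.Perm X := PresentedGroup.toGroup bv_rels_hold

lemma psi_lamB (i : ℕ) : psi (lamB i) = lam i := PresentedGroup.toGroup.of bv_rels_hold
lemma psi_sigB (i : ℕ) : psi (sigB i) = sg i := PresentedGroup.toGroup.of bv_rels_hold

/-! ### Algebra in `BVhat` -/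

lemma relB {m q : ℕ} (h : m < q) : lamB q * lamB m = lamB m * lamB (q+1) := by
  have h1 : PresentedGroup.mk bvhatRels (lamF q * lamF m * (lamF m * lamF (q+1))⁻¹) = 1 := by
    apply (QuotientGroup.eq_one_iff _).2
    exact Subgroup.subset_normalClosure (Or.inl ⟨m, q, h, rfl⟩)
  rw [map_mul, map_mul, map_inv, map_mul, mul_inv_eq_one] at h1
  exact h1

lemma lamB_mul_pow {j : ℕ} (k : ℕ) (hj : 1 ≤ j) :
    lamB j * lamB 0 ^ k = lamB 0 ^ k * lamB (j + k) := by
  induction k with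
  | zero => simp
  | succ k ih =>
    rw [pow_succ, ← mul_assoc, ih, mul_assoc, relB (show 0 < j + k by omega),
      ← mul_assoc, ← pow_succ, Nat.add_assoc]

/-- `w_k = λ₀^k λ₁ λ₀^{-k}`. -/
def wB (k : ℕ) : BVhat := lamB 0 ^ k * lamB 1 * (lamB 0 ^ k)⁻¹

lemma w_shift (k : ℕ) : lamB 0 * wB k * (lamB 0)⁻¹ = wB (k+1) := by
  unfold wB
  rw [pow_succ']
  group

lemma w_conj (j m : ℕ) : wB (j + m) = lamB 0 ^ m * wB j * (lamB 0 ^ m)⁻¹ := by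
  induction m with
  | zero => simp
  | succ m ih =>
    have : j + (m+1) = (j + m) + 1 := by omega
    rw [this, ← w_shift (j+m), ih, pow_succ']
    group

lemma inv_pow_lamB (k : ℕ) : (lamB 0 ^ k)⁻¹ * lamB 1 = lamB (1 + k) * (lamB 0 ^ k)⁻¹ := by
  have h := lamB_mul_pow (j := 1) k le_rfl
  calc (lamB 0 ^ k)⁻¹ * lamB 1 = (lamB 0 ^ k)⁻¹ * (lamB 1 * lamB 0 ^ k) * (lamB 0 ^ k)⁻¹ := by
        group
    _ = (lamB 0 ^ k)⁻¹ * (lamB 0 ^ k * lamB (1 + k)) * (lamB 0 ^ k)⁻¹ := by rw [h]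
    _ = lamB (1 + k) * (lamB 0 ^ k)⁻¹ := by group

lemma w_mul {k : ℕ} (hk : 2 ≤ k) : wB k * lamB 1 = wB 1 * wB k := by
  have e1 : wB k * lamB 1 = lamB 0 ^ k * lamB 1 * ((lamB 0 ^ k)⁻¹ * lamB 1) := by
    unfold wB; group
  rw [inv_pow_lamB k] at e1
  -- RHS
  obtain ⟨j, rfl⟩ : ∃ j, k = j + 1 := ⟨k - 1, by omega⟩
  have e2 : wB 1 * wB (j+1) = lamB 0 * (lamB 1 * lamB 0 ^ j) * lamB 1 * (lamB 0 ^ (j+1))⁻¹ := by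
    unfold wB; group
  have h2 : lamB 1 * lamB 0 ^ j = lamB 0 ^ j * lamB (1 + j) := lamB_mul_pow j le_rfl
  rw [h2] at e2
  have h3 : lamB (1+j) * lamB 1 = lamB 1 * lamB (1+j+1) := relB (by omega)
  rw [e1, e2]
  calc lamB 0 ^ (j+1) * lamB 1 * (lamB (1 + (j+1)) * (lamB 0 ^ (j+1))⁻¹)
      = lamB 0 ^ (j+1) * (lamB 1 * lamB (1+j+1)) * (lamB 0 ^ (j+1))⁻¹ := by
        have : 1 + (j+1) = 1+j+1 := by omega
        rw [this]; group
    _ = lamB 0 ^ (j+1) * (lamB (1+j) * lamB 1) * (lamB 0 ^ (j+1))⁻¹ := by rw [h3]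
    _ = lamB 0 * (lamB 0 ^ j * lamB (1 + j)) * lamB 1 * (lamB 0 ^ (j+1))⁻¹ := by
        rw [pow_succ']; group

lemma w_comm {m q : ℕ} (h : m < q) : wB (q+1) * wB m = wB (m+1) * wB (q+1) := by
  obtain ⟨a, ha1, ha2⟩ : ∃ a, q + 1 = a + m ∧ 2 ≤ a := ⟨q+1-m, by omega, by omega⟩
  have hm : wB m = lamB 0 ^ m * wB 0 * (lamB 0 ^ m)⁻¹ := by
    have h0 := w_conj 0 m; rw [show (0:ℕ) + m = m by omega] at h0; exact h0
  have hm1 : wB (m+1) = lamB 0 ^ m * wB 1 * (lamB 0 ^ m)⁻¹ := by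
    rw [show m+1 = 1+m by omega]; exact w_conj 1 m
  have haq : wB (q+1) = lamB 0 ^ m * wB a * (lamB 0 ^ m)⁻¹ := by
    rw [ha1]; exact w_conj a m
  have hw0 : wB 0 = lamB 1 := by unfold wB; simp
  calc wB (q+1) * wB m
      = lamB 0 ^ m * (wB a * wB 0) * (lamB 0 ^ m)⁻¹ := by rw [haq, hm]; group
    _ = lamB 0 ^ m * (wB a * lamB 1) * (lamB 0 ^ m)⁻¹ := by rw [hw0]
    _ = lamB 0 ^ m * (wB 1 * wB a) * (lamB 0 ^ m)⁻¹ := by rw [w_mul ha2]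
    _ = wB (m+1) * wB (q+1) := by rw [hm1, haq]; group

lemma vB_eq (n : ℕ) : vB n = wB (n+1) * (lamB 0)⁻¹ := by
  unfold vB wB
  have e : (-((n:ℤ) + 2)) = -(((n+1 : ℕ) : ℤ)) + (-1) := by push_cast; ring
  rw [e, zpow_add, zpow_neg, zpow_natCast, zpow_neg_one]
  group

lemma w_shift_inv (k : ℕ) : (lamB 0)⁻¹ * wB (k+1) * lamB 0 = wB k := by
  rw [← w_shift]; group

lemma vB_comm {m q : ℕ} (h : m < q) : vB q * vB m = vB m * vB (q+1) := by
  have h1 := w_shift_inv m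
  have h2 := w_shift_inv (q+1)
  calc vB q * vB m
      = wB (q+1) * ((lamB 0)⁻¹ * wB (m+1) * lamB 0) * ((lamB 0)⁻¹ * (lamB 0)⁻¹) := by
        rw [vB_eq, vB_eq]; group
    _ = wB (q+1) * wB m * ((lamB 0)⁻¹ * (lamB 0)⁻¹) := by rw [h1]
    _ = wB (m+1) * wB (q+1) * ((lamB 0)⁻¹ * (lamB 0)⁻¹) := by rw [w_comm h]
    _ = wB (m+1) * ((lamB 0)⁻¹ * wB (q+1+1) * lamB 0) * ((lamB 0)⁻¹ * (lamB 0)⁻¹) := by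
        rw [h2]
    _ = vB m * vB (q+1) := by rw [vB_eq, vB_eq]; group

lemma f_rels_hold : ∀ r ∈ fRels, FreeGroup.lift vB r = 1 := by
  rintro r ⟨m, q, h, rfl⟩
  simp only [map_mul, map_inv, FreeGroup.lift_apply_of, mul_inv_eq_one]
  exact vB_comm h

def phi : FGrp →* BVhat := PresentedGroup.toGroup f_rels_hold

lemma phi_of (i : ℕ) : phi (PresentedGroup.of i) = vB i :=
  PresentedGroup.toGroup.of f_rels_hold


/-! ### `θ = ψ ∘ φ` sends the generators to the permutations `XP n` -/

def theta : FGrp →* Equiv.Perm X := psi.comp phi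

lemma lam_inv_apply (i n : ℕ) (c : C) :
    (lam i)⁻¹ (n, c) = if n < i then (n,c)
      else if n = i then (if c 0 then (i+1, tl c) else (i, tl c)) else (n+1, c) := rfl

lemma lam_inv_self (i : ℕ) (c : C) (h : c 0 = false) : (lam i)⁻¹ (i, c) = (i, tl c) := by
  rw [lam_inv_apply]
  simp [h]

lemma lam_inv_self' (i : ℕ) (c : C) (h : c 0 = true) : (lam i)⁻¹ (i, c) = (i+1, tl c) := by
  rw [lam_inv_apply]
  simp [h]

lemma lam_inv_gt (i n : ℕ) (c : C) (h : i < n) : (lam i)⁻¹ (n, c) = (n+1, c) := by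
  rw [lam_inv_apply]
  rw [if_neg (by omega), if_neg (by omega)]

lemma strand0_zero (e : Equiv.Perm C) (c : C) : strand0 e (0, c) = (0, e c) := by
  simp [strand0]

lemma strand0_pos (e : Equiv.Perm C) (n : ℕ) (c : C) (h : n ≠ 0) :
    strand0 e (n, c) = (n, c) := by
  simp [strand0, h]

lemma Y_succ_true (n : ℕ) (z : C) (h : z 0 = true) : Y (n+1) z = z := by
  show halfPerm (Y n) z = z
  simp [halfPerm, h]

lemma Y_succ_false (n : ℕ) (z : C) : Y (n+1) (cons false z) = cons false (Y n z) := by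
  show halfPerm (Y n) (cons false z) = _
  simp [halfPerm]

lemma y0_apply (z : C) : y0 z = if z 0 then cons true z
    else if z 1 then cons true (cons false (tl (tl z))) else tl z := rfl

lemma XP_def (n : ℕ) : XP n = strand0 (Y n) := rfl

lemma y0_true (z : C) (h : z 0 = true) : y0 z = cons true z := by
  rw [y0_apply, if_pos h]

lemma y0_01 (z : C) (h : z 0 = true) : y0 (cons false z) = cons true (cons false (tl z)) := by
  rw [y0_apply]
  simp [h]

lemma y0_00 (z : C) (h : z 0 = false) : y0 (cons false z) = z := by
  rw [y0_apply]
  simp [h]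

lemma XP_conj (n : ℕ) : lam 0 * XP n * (lam 0)⁻¹ = XP (n+1) := by
  apply Equiv.ext; rintro ⟨m, c⟩
  simp only [Equiv.Perm.mul_apply]
  rcases Nat.eq_zero_or_pos m with rfl | hm
  · by_cases hc : c 0
    · rw [lam_inv_self' 0 c hc, XP_def, strand0_pos _ _ _ (by omega), lam_succ 0 (tl c),
        XP_def, strand0_zero, Y_succ_true n c hc, cons_tl' hc]
    · rw [lam_inv_self 0 c (by simpa using hc), XP_def, strand0_zero, lam_self 0,
        XP_def, strand0_zero]
      have : c = cons false (tl c) := (cons_tl' (by simpa using hc)).symm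
      rw [this, tl_cons, Y_succ_false]
  · obtain ⟨m, rfl⟩ : ∃ k, m = k + 1 := ⟨m - 1, by omega⟩
    rw [lam_inv_gt 0 (m+1) c (by omega), XP_def, strand0_pos _ _ _ (by omega),
      lam_gt 0 (m+1+1) c (by omega), XP_def, strand0_pos _ _ _ (by omega)]
    rfl

lemma XP_base : lam 0 * lam 1 * (lam 0)⁻¹ * (lam 0)⁻¹ = XP 0 := by
  apply Equiv.ext; rintro ⟨m, c⟩
  simp only [Equiv.Perm.mul_apply]
  rcases Nat.eq_zero_or_pos m with rfl | hm
  · by_cases hc : c 0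
    · rw [lam_inv_self' 0 c hc, lam_inv_gt 0 1 (tl c) (by omega), lam_succ 1 (tl c),
        lam_succ 0 (cons true (tl c)), XP_def, strand0_zero]
      show _ = (0, y0 c)
      rw [y0_true c hc, cons_tl' hc]
    · have hc' : c 0 = false := by simpa using hc
      rw [lam_inv_self 0 c hc', XP_def, strand0_zero]
      by_cases h1 : tl c 0
      · rw [lam_inv_self' 0 (tl c) h1, lam_self 1, lam_succ 0]
        show _ = (0, y0 c)
        have e : c = cons false (tl c) := (cons_tl' hc').symm
        rw [e, y0_01 (tl c) h1, tl_cons]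
      · have h1' : tl c 0 = false := by simpa using h1
        rw [lam_inv_self 0 (tl c) h1', lam_lt 1 0 (tl (tl c)) (by omega),
          lam_self 0 (tl (tl c))]
        show _ = (0, y0 c)
        have e : c = cons false (tl c) := (cons_tl' hc').symm
        rw [e, y0_00 (tl c) h1', tl_cons]
        exact congrArg _ (cons_tl' h1')
  · obtain ⟨m, rfl⟩ : ∃ k, m = k + 1 := ⟨m - 1, by omega⟩
    rw [lam_inv_gt 0 (m+1) c (by omega), lam_inv_gt 0 (m+1+1) c (by omega),
      lam_gt 1 (m+1+1+1) c (by omega), show m+1+1+1-1 = m+1+1 from rfl,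
      lam_gt 0 (m+1+1) c (by omega), XP_def, strand0_pos _ _ _ (by omega)]
    rfl

lemma theta_of (n : ℕ) : theta (PresentedGroup.of n) = XP n := by
  have h : theta (PresentedGroup.of n)
      = lam 0 ^ (n+1) * lam 1 * lam 0 ^ (-((n:ℤ) + 2)) := by
    show psi (phi (PresentedGroup.of n)) = _
    rw [phi_of, vB, map_mul, map_mul, map_pow, map_zpow, psi_lamB, psi_lamB]
  rw [h]
  clear h
  induction n with
  | zero =>
    rw [← XP_base, pow_one]
    norm_num
    group
  | succ n ih =>
    have e : lam 0 ^ (n + 1 + 1) * lam 1 * lam 0 ^ (-(((n+1:ℕ)):ℤ) + -2)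
        = lam 0 * (lam 0 ^ (n+1) * lam 1 * lam 0 ^ (-((n:ℤ)+2))) * (lam 0)⁻¹ := by
      push_cast
      group
    rw [show (-((((n+1:ℕ)):ℤ) + 2)) = (-(((n+1:ℕ)):ℤ) + -2) from by ring, e, ih, XP_conj]


/-! ### Word combinatorics in `FGrp` -/

/-- generator of `FGrp`. -/
def xg (i : ℕ) : FGrp := PresentedGroup.of i

lemma relF {m q : ℕ} (h : m < q) : xg q * xg m = xg m * xg (q+1) := by
  have h1 : PresentedGroup.mk fRels
      (FreeGroup.of q * FreeGroup.of m * (FreeGroup.of m * FreeGroup.of (q+1))⁻¹) = 1 := by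
    apply (QuotientGroup.eq_one_iff _).2
    exact Subgroup.subset_normalClosure ⟨m, q, h, rfl⟩
  rw [map_mul, map_mul, map_inv, map_mul, mul_inv_eq_one] at h1
  exact h1

def prodX (L : List ℕ) : FGrp := (L.map xg).prod

@[simp] lemma prodX_nil : prodX [] = 1 := rfl
@[simp] lemma prodX_cons (a : ℕ) (L : List ℕ) : prodX (a :: L) = xg a * prodX L := by
  simp [prodX]
lemma prodX_append (L M : List ℕ) : prodX (L ++ M) = prodX L * prodX M := by
  simp [prodX]

lemma inv_xg_mul_gt {a b : ℕ} (hab : b < a) : (xg a)⁻¹ * xg b = xg b * (xg (a+1))⁻¹ := by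
  have h := relF hab
  calc (xg a)⁻¹ * xg b = (xg a)⁻¹ * (xg b * xg (a+1)) * (xg (a+1))⁻¹ := by group
    _ = (xg a)⁻¹ * (xg a * xg b) * (xg (a+1))⁻¹ := by rw [← h]
    _ = xg b * (xg (a+1))⁻¹ := by group

lemma inv_xg_mul_lt {a b : ℕ} (hab : a < b) : (xg a)⁻¹ * xg b = xg (b+1) * (xg a)⁻¹ := by
  have h := relF hab
  calc (xg a)⁻¹ * xg b = (xg a)⁻¹ * (xg b * xg a) * (xg a)⁻¹ := by group
    _ = (xg a)⁻¹ * (xg a * xg (b+1)) * (xg a)⁻¹ := by rw [h]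
    _ = xg (b+1) * (xg a)⁻¹ := by group

lemma K1 (L : List ℕ) : ∀ a : ℕ, ∃ L' M' : List ℕ,
    (xg a)⁻¹ * prodX L = prodX L' * (prodX M')⁻¹ := by
  induction L with
  | nil => exact fun a => ⟨[], [a], by simp⟩
  | cons b L ih =>
    intro a
    rcases lt_trichotomy a b with h | h | h
    · obtain ⟨L', M', hLM⟩ := ih a
      refine ⟨(b+1) :: L', M', ?_⟩
      rw [prodX_cons, prodX_cons, ← mul_assoc, inv_xg_mul_lt h, mul_assoc, hLM, ← mul_assoc]
    · subst h
      refine ⟨L, [], ?_⟩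
      rw [prodX_cons, ← mul_assoc]
      simp
    · obtain ⟨L', M', hLM⟩ := ih (a+1)
      refine ⟨b :: L', M', ?_⟩
      rw [prodX_cons, prodX_cons, ← mul_assoc, inv_xg_mul_gt h, mul_assoc, hLM, ← mul_assoc]

lemma K2 (M : List ℕ) : ∀ L : List ℕ, ∃ L' M' : List ℕ,
    (prodX M)⁻¹ * prodX L = prodX L' * (prodX M')⁻¹ := by
  induction M with
  | nil => exact fun L => ⟨L, [], by simp⟩
  | cons a M ih =>
    intro L
    obtain ⟨L1, M1, h1⟩ := K1 L a
    obtain ⟨L2, M2, h2⟩ := ih L1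
    refine ⟨L2, M1 ++ M2, ?_⟩
    have : (prodX (a :: M))⁻¹ * prodX L = (prodX M)⁻¹ * ((xg a)⁻¹ * prodX L) := by
      rw [prodX_cons]; group
    rw [this, h1, ← mul_assoc, h2, prodX_append]
    group

lemma decompose (g : FGrp) : ∃ L M : List ℕ, g = prodX L * (prodX M)⁻¹ := by
  have hg : g ∈ Subgroup.closure (Set.range (PresentedGroup.of : ℕ → FGrp)) := by
    rw [PresentedGroup.closure_range_of]; trivial
  refine Subgroup.closure_induction ?_ ?_ ?_ ?_ hg
  · rintro x ⟨i, rfl⟩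
    exact ⟨[i], [], by simp [xg]⟩
  · exact ⟨[], [], by simp⟩
  · rintro x y - - ⟨L1, M1, rfl⟩ ⟨L2, M2, rfl⟩
    obtain ⟨L3, M3, h3⟩ := K2 M1 L2
    refine ⟨L1 ++ L3, M2 ++ M3, ?_⟩
    rw [prodX_append, prodX_append]
    calc prodX L1 * (prodX M1)⁻¹ * (prodX L2 * (prodX M2)⁻¹)
        = prodX L1 * ((prodX M1)⁻¹ * prodX L2) * (prodX M2)⁻¹ := by group
      _ = prodX L1 * (prodX L3 * (prodX M3)⁻¹) * (prodX M2)⁻¹ := by rw [h3]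
      _ = prodX L1 * prodX L3 * ((prodX M2) * (prodX M3))⁻¹ := by group
  · rintro x - ⟨L, M, rfl⟩
    exact ⟨M, L, by group⟩

lemma sort_step (L : List ℕ) : ∀ a : ℕ, L.Pairwise (· ≤ ·) →
    ∃ L' : List ℕ, L'.Pairwise (· ≤ ·) ∧ prodX L' = xg a * prodX L ∧
      (∀ x ∈ L', a ≤ x ∨ x ∈ L) := by
  induction L with
  | nil =>
    intro a _
    exact ⟨[a], by simp, by simp, by simp⟩
  | cons b L ih =>
    intro a hs
    rw [List.pairwise_cons] at hs
    rcases le_or_gt a b with h | h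
    · refine ⟨a :: b :: L, ?_, rfl, ?_⟩
      · rw [List.pairwise_cons]
        refine ⟨?_, by rw [List.pairwise_cons]; exact hs⟩
        intro x hx
        rcases List.mem_cons.1 hx with rfl | hx
        · exact h
        · exact le_trans h (hs.1 x hx)
      · intro x hx
        rcases List.mem_cons.1 hx with rfl | hx
        · exact Or.inl le_rfl
        · exact Or.inr hx
    · obtain ⟨L', hs', hp', hb'⟩ := ih (a+1) hs.2
      refine ⟨b :: L', ?_, ?_, ?_⟩
      · rw [List.pairwise_cons]
        refine ⟨?_, hs'⟩
        intro x hx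
        rcases hb' x hx with h1 | h1
        · omega
        · exact hs.1 x h1
      · rw [prodX_cons, prodX_cons, hp', ← mul_assoc, ← mul_assoc]
        congr 1
        exact (relF h).symm
      · intro x hx
        rcases List.mem_cons.1 hx with rfl | hx
        · exact Or.inr (List.mem_cons_self)
        · rcases hb' x hx with h1 | h1
          · exact Or.inl (by omega)
          · exact Or.inr (List.mem_cons_of_mem _ h1)

lemma sortProd (L : List ℕ) : ∃ L' : List ℕ, L'.Pairwise (· ≤ ·) ∧ prodX L' = prodX L := by
  induction L with
  | nil => exact ⟨[], by simp, rfl⟩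
  | cons a L ih =>
    obtain ⟨L1, hs1, hp1⟩ := ih
    obtain ⟨L', hs', hp', _⟩ := sort_step L1 a hs1
    exact ⟨L', hs', by rw [hp', hp1, prodX_cons]⟩



/-! ### the permutation side: evaluation and peeling -/

def prodY (L : List ℕ) : Equiv.Perm C := (L.map Y).prod

@[simp] lemma prodY_nil : prodY [] = 1 := rfl
@[simp] lemma prodY_cons (a : ℕ) (L : List ℕ) : prodY (a :: L) = Y a * prodY L := by
  simp [prodY]

lemma strand0_one : strand0 1 = 1 := by
  apply Equiv.ext; rintro ⟨n, c⟩
  cases n <;> simp [strand0]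

def strand0Hom : Equiv.Perm C →* Equiv.Perm X :=
  MonoidHom.mk' strand0 strand0_mul

lemma strand0_inj : Function.Injective strand0 := by
  intro e f h
  apply Equiv.ext; intro z
  have := congrArg (fun (g : Equiv.Perm X) => g (0, z)) h
  simpa [strand0_zero, Prod.ext_iff] using this

lemma theta_prodX (L : List ℕ) : theta (prodX L) = strand0 (prodY L) := by
  induction L with
  | nil => simp [strand0_one.symm]
  | cons a L ih =>
    rw [prodX_cons, prodY_cons, map_mul, ih, strand0_mul]
    congr 1
    exact theta_of a

lemma Y_pos_fix {a : ℕ} (ha : 1 ≤ a) {z : C} (hz : z 0 = true) : Y a z = z := by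
  obtain ⟨b, rfl⟩ : ∃ b, a = b + 1 := ⟨a - 1, by omega⟩
  exact Y_succ_true b z hz

lemma prodY_pos_fix {L : List ℕ} (hL : ∀ x ∈ L, 1 ≤ x) {z : C} (hz : z 0 = true) :
    prodY L z = z := by
  induction L with
  | nil => rfl
  | cons a L ih =>
    rw [prodY_cons, Equiv.Perm.mul_apply,
      ih (fun x hx => hL x (List.mem_cons_of_mem _ hx))]
    exact Y_pos_fix (hL a (List.mem_cons_self)) hz

lemma prodY_cons_false {L : List ℕ} (hL : ∀ x ∈ L, 1 ≤ x) (z : C) :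
    prodY L (cons false z) = cons false (prodY (L.map (· - 1)) z) := by
  induction L with
  | nil => rfl
  | cons a L ih =>
    rw [prodY_cons, Equiv.Perm.mul_apply,
      ih (fun x hx => hL x (List.mem_cons_of_mem _ hx))]
    have ha : 1 ≤ a := hL a (List.mem_cons_self)
    obtain ⟨b, rfl⟩ : ∃ b, a = b + 1 := ⟨a - 1, by omega⟩
    rw [Y_succ_false, List.map_cons, prodY_cons]
    simp

/-- the point `1^r 0^∞`. -/
def pt (r : ℕ) : C := fun k => decide (k < r)

lemma pt_zero_true (r : ℕ) : pt (r+1) 0 = true := by simp [pt]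

lemma cons_true_pt (r : ℕ) : cons true (pt r) = pt (r+1) := by
  funext k
  cases k with
  | zero => simp [pt]
  | succ k =>
    show pt r k = pt (r+1) (k+1)
    simp only [pt]
    rw [decide_eq_decide]
    omega

lemma pt_inj {a b : ℕ} (h : pt a = pt b) : a = b := by
  by_contra hne
  rcases Nat.lt_or_ge a b with h1 | h1
  · have := congrFun h a
    simp [pt] at this
    omega
  · have := congrFun h b
    simp [pt] at this
    omega

lemma EV (L : List ℕ) (hs : L.Pairwise (· ≤ ·)) : prodY L (pt 1) = pt (1 + L.count 0) := by
  induction L with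
  | nil => simp
  | cons a L ih =>
    rw [List.pairwise_cons] at hs
    rw [prodY_cons, Equiv.Perm.mul_apply, ih hs.2]
    rcases Nat.eq_zero_or_pos a with rfl | ha
    · have e : Y 0 (pt (1 + L.count 0)) = cons true (pt (1 + L.count 0)) := by
        show y0 _ = _
        refine y0_true _ ?_
        rw [show 1 + L.count 0 = L.count 0 + 1 from by omega]
        exact pt_zero_true _
      rw [e, show 1 + L.count 0 = L.count 0 + 1 from by omega, cons_true_pt,
        List.count_cons_self]
      exact congrArg pt (by omega)
    · have h0 : L.count 0 = 0 := by
        rw [List.count_eq_zero]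
        intro hmem
        have := hs.1 0 hmem
        omega
      rw [h0, List.count_cons_of_ne (show a ≠ (0:ℕ) by omega), h0]
      simpa using Y_pos_fix ha (pt_zero_true 0)


/-! ### uniqueness of sorted positive words -/

lemma map_pred_succ (L : List ℕ) (hL : ∀ x ∈ L, 1 ≤ x) :
    (L.map (· - 1)).map (· + 1) = L := by
  induction L with
  | nil => rfl
  | cons a L ih =>
    simp only [List.map_cons, List.cons.injEq]
    constructor
    · have := hL a (List.mem_cons_self); omega
    · exact ih (fun x hx => hL x (List.mem_cons_of_mem _ hx))

lemma sorted_map_pred {L : List ℕ} (hs : L.Pairwise (· ≤ ·)) :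
    (L.map (· - 1)).Pairwise (· ≤ ·) :=
  List.Pairwise.map _ (fun {a b} (h : a ≤ b) => by simp; omega) hs

lemma sum_map_pred (L : List ℕ) (hL : ∀ x ∈ L, 1 ≤ x) :
    (L.map (· - 1)).sum + L.length = L.sum := by
  induction L with
  | nil => rfl
  | cons a L ih =>
    have h1 := hL a (List.mem_cons_self)
    have h2 := ih (fun x hx => hL x (List.mem_cons_of_mem _ hx))
    simp only [List.map_cons, List.sum_cons, List.length_cons]
    omega

lemma prodY_eq_of_ge_one {L M : List ℕ} (hL : ∀ x ∈ L, 1 ≤ x) (hM : ∀ x ∈ M, 1 ≤ x)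
    (h : prodY L = prodY M) : prodY (L.map (· - 1)) = prodY (M.map (· - 1)) := by
  apply Equiv.ext
  intro z
  apply cons_injective false
  rw [← prodY_cons_false hL z, ← prodY_cons_false hM z, h]

lemma ML : ∀ N : ℕ, ∀ L M : List ℕ, L.sum + M.sum + L.length + M.length ≤ N →
    L.Pairwise (· ≤ ·) → M.Pairwise (· ≤ ·) → prodY L = prodY M → L = M := by
  intro N
  induction N with
  | zero =>
    intro L M hN _ _ _
    have hL : L = [] := List.eq_nil_of_length_eq_zero (by omega)
    have hM : M = [] := List.eq_nil_of_length_eq_zero (by omega)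
    rw [hL, hM]
  | succ N ih =>
    intro L M hN hsL hsM h
    have hcount : L.count 0 = M.count 0 := by
      have := pt_inj (a := 1 + L.count 0) (b := 1 + M.count 0)
        (by rw [← EV L hsL, ← EV M hsM, h])
      omega
    have ge_one_of_sorted : ∀ (b : ℕ) (K : List ℕ), (b :: K).Pairwise (· ≤ ·) → b ≠ 0 →
        ∀ x ∈ b :: K, 1 ≤ x := by
      intro b K hs hb x hx
      rw [List.pairwise_cons] at hs
      rcases List.mem_cons.1 hx with rfl | hx
      · omega
      · have := hs.1 x hx; omega
    rcases L with _ | ⟨a, L'⟩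
    · rcases M with _ | ⟨b, M'⟩
      · rfl
      · have hb : b ≠ 0 := by
          intro h0
          subst h0
          rw [List.count_cons_self] at hcount
          simp only [List.count_nil] at hcount
          omega
        have hM1 := ge_one_of_sorted b M' hsM hb
        have h2 : prodY (([] : List ℕ).map (· - 1)) = prodY ((b :: M').map (· - 1)) :=
          prodY_eq_of_ge_one (by simp) hM1 h
        have h3 := ih [] ((b :: M').map (· - 1))
          (by
            have hmp := sum_map_pred (b :: M') hM1
            simp only [List.length_map, List.sum_nil, List.length_nil, List.sum_cons,
              List.length_cons] at hN hmp ⊢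
            omega)
          (by simp) (sorted_map_pred hsM) h2
        exact absurd (congrArg List.length h3) (by simp)
    · rcases M with _ | ⟨b, M'⟩
      · have ha : a ≠ 0 := by
          intro h0
          subst h0
          rw [List.count_cons_self] at hcount
          simp only [List.count_nil] at hcount
          omega
        have hL1 := ge_one_of_sorted a L' hsL ha
        have h2 : prodY ((a :: L').map (· - 1)) = prodY (([] : List ℕ).map (· - 1)) :=
          prodY_eq_of_ge_one hL1 (by simp) h
        have h3 := ih ((a :: L').map (· - 1)) []
          (by
            have hmp := sum_map_pred (a :: L') hL1
            simp only [List.length_map, List.sum_nil, List.length_nil, List.sum_cons,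
              List.length_cons] at hN hmp ⊢
            omega)
          (sorted_map_pred hsL) (by simp) h2
        exact absurd (congrArg List.length h3) (by simp)
      · rcases Nat.eq_zero_or_pos a with rfl | ha
        · rcases Nat.eq_zero_or_pos b with rfl | hb
          · -- both start with 0 : cancel
            rw [prodY_cons, prodY_cons] at h
            have h2 : prodY L' = prodY M' := mul_left_cancel h
            have h3 := ih L' M'
              (by simp only [List.sum_cons, List.length_cons] at hN; omega)
              (List.pairwise_cons.1 hsL).2 (List.pairwise_cons.1 hsM).2 h2
            rw [h3]
          · exfalso
            have hbM : (0:ℕ) ∉ b :: M' := by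
              intro hmem
              have := ge_one_of_sorted b M' hsM (by omega) 0 hmem
              omega
            rw [List.count_cons_self, List.count_eq_zero.2 hbM] at hcount
            omega
        · rcases Nat.eq_zero_or_pos b with rfl | hb
          · exfalso
            have haL : (0:ℕ) ∉ a :: L' := by
              intro hmem
              have := ge_one_of_sorted a L' hsL (by omega) 0 hmem
              omega
            rw [List.count_cons_self, List.count_eq_zero.2 haL] at hcount
            omega
          · -- both ≥ 1
            have hL1 := ge_one_of_sorted a L' hsL (by omega)
            have hM1 := ge_one_of_sorted b M' hsM (by omega)
            have h2 := prodY_eq_of_ge_one hL1 hM1 h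
            have h3 := ih ((a :: L').map (· - 1)) ((b :: M').map (· - 1))
              (by
                have e1 := sum_map_pred (a :: L') hL1
                have e2 := sum_map_pred (b :: M') hM1
                simp only [List.length_map, List.length_cons, List.sum_cons]
                  at hN e1 e2 ⊢
                omega)
              (sorted_map_pred hsL) (sorted_map_pred hsM) h2
            have := congrArg (List.map (· + 1)) h3
            rw [map_pred_succ _ hL1, map_pred_succ _ hM1] at this
            exact this

/-! ### final assembly -/

lemma theta_inj : Function.Injective theta := by
  rw [injective_iff_map_eq_one]
  intro g hg
  obtain ⟨L, M, rfl⟩ := decompose g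
  obtain ⟨Ls, hsL, hpL⟩ := sortProd L
  obtain ⟨Ms, hsM, hpM⟩ := sortProd M
  have h1 : theta (prodX L) = theta (prodX M) := by
    rw [map_mul, map_inv, mul_inv_eq_one] at hg
    exact hg
  have h2 : strand0 (prodY Ls) = strand0 (prodY Ms) := by
    rw [← theta_prodX, ← theta_prodX, hpL, hpM]
    exact h1
  have h4 : Ls = Ms := ML _ Ls Ms le_rfl hsL hsM (strand0_inj h2)
  have h5 : prodX L = prodX M := by rw [← hpL, ← hpM, h4]
  rw [h5, mul_inv_cancel]

lemma phi_inj : Function.Injective phi := by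
  intro x y hxy
  apply theta_inj
  show psi (phi x) = psi (phi y)
  rw [hxy]

lemma range_phi : phi.range = Subgroup.closure {x : BVhat | ∃ i, x = vB i} := by
  have hset : {x : BVhat | ∃ i, x = vB i} = Set.range vB := by
    ext x
    exact ⟨fun ⟨i, hi⟩ => ⟨i, hi.symm⟩, fun ⟨i, hi⟩ => ⟨i, hi.symm⟩⟩
  have hrange : (fun i => phi (PresentedGroup.of i)) = vB := funext phi_of
  calc phi.range = Subgroup.map phi ⊤ := phi.range_eq_map
    _ = Subgroup.map phi (Subgroup.closure (Set.range PresentedGroup.of)) := by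
        rw [PresentedGroup.closure_range_of]
    _ = Subgroup.closure (phi '' Set.range PresentedGroup.of) :=
        (MonoidHom.map_closure phi _)
    _ = Subgroup.closure (Set.range (fun i => phi (PresentedGroup.of i))) := by
        rw [← Set.range_comp]
        rfl
    _ = Subgroup.closure {x : BVhat | ∃ i, x = vB i} := by rw [hrange, ← hset]

theorem F_embeds_in_BVhat :
    ∃ φ : FGrp →* BVhat,
      (∀ i : ℕ, φ (PresentedGroup.of i) = vB i) ∧
      Function.Injective φ ∧
      φ.range = Subgroup.closure {x : BVhat | ∃ i, x = vB i} :=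
  ⟨phi, phi_of, phi_inj, range_phi⟩

end BrinStmt5
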